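/- Let $0<p<u<\infty$. Then the Morrey sequence space $m_{u,p}(\mathbb{Z}^d)$, equipped with the (quasi-)norm $\|\cdot\,|\,m_{u,p}\|$, is not separable: it contains an uncountable family of elements any two of which are at distance bounded below by a fixed positive constant in the $m_{u,p}$ quasi-norm (in fact, there is an uncountable set of elements with pairwise distances $\ge 2^{1-j_0 d/u}$ along suitable scales, preventing the existence of a countable dense subset). -/

import Mathlib

open scoped ENNReal NNReal BigOperators
open Filter

/-- The unit cube `Q_{0,k}` is contained in the dyadic cube `Q_{-j,m}` of side length `2^j`. -/
def inDyadic (d j : ℕ) (m k : Fin d → ℤ) : Prop :=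
  ∀ i, 2 ^ j * m i ≤ k i ∧ k i < 2 ^ j * (m i + 1)

/-- The Morrey sequence space quasi-norm `‖λ | m_{u,p}(ℤ^d)‖`, with values in `ℝ≥0∞`. -/
noncomputable def morreyNorm (d : ℕ) (u p : ℝ) (lam : (Fin d → ℤ) → ℂ) : ℝ≥0∞ :=
  ⨆ (j : ℕ) (m : Fin d → ℤ),
    ((2 : ℝ≥0∞) ^ (j * d)) ^ (1 / u - 1 / p) *
      (∑' k : {k : Fin d → ℤ // inDyadic d j m k}, (‖lam k.1‖₊ : ℝ≥0∞) ^ p) ^ (1 / p)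

/-- The `ℓ_r(ℤ^d)` norm. -/
noncomputable def lpNorm (d : ℕ) (r : ℝ) (lam : (Fin d → ℤ) → ℂ) : ℝ≥0∞ :=
  (∑' k : Fin d → ℤ, (‖lam k‖₊ : ℝ≥0∞) ^ r) ^ (1 / r)

/-- The `ℓ_∞(ℤ^d)` norm. -/
noncomputable def lInftyNorm (d : ℕ) (lam : (Fin d → ℤ) → ℂ) : ℝ≥0∞ :=
  ⨆ k : Fin d → ℤ, (‖lam k‖₊ : ℝ≥0∞)

/-- The weak Lorentz `ℓ_{u,∞}(ℤ^d)` norm, via the distribution function. -/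
noncomputable def weakNorm (d : ℕ) (u : ℝ) (lam : (Fin d → ℤ) → ℂ) : ℝ≥0∞ :=
  ⨆ t : ℝ≥0, (t : ℝ≥0∞) *
    (∑' _ : {k : Fin d → ℤ // (t : ℝ) < ‖lam k‖}, (1 : ℝ≥0∞)) ^ (1 / u)

/-- The norm of the level-`j` space `X^{(j)}_{u,p}(ℤ^d)`. -/
noncomputable def XjNorm (d : ℕ) (u p p' : ℝ) (j : ℕ) (lam : (Fin d → ℤ) → ℂ) : ℝ≥0∞ :=
  ((2 : ℝ≥0∞) ^ (j * d)) ^ (1 / p - 1 / u) *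
    ∑' m : Fin d → ℤ,
      (∑' k : {k : Fin d → ℤ // inDyadic d j m k}, (‖lam k.1‖₊ : ℝ≥0∞) ^ p') ^ (1 / p')

/-- The norm of `X_{u,p}(ℤ^d)`: infimum over decompositions `λ = ∑_j λ^{(j)}`. -/
noncomputable def XupNorm (d : ℕ) (u p p' : ℝ) (lam : (Fin d → ℤ) → ℂ) : ℝ≥0∞ :=
  ⨅ (L : ℕ → (Fin d → ℤ) → ℂ) (_ : ∀ k, HasSum (fun j => L j k) (lam k)),
    ∑' j : ℕ, XjNorm d u p p' j (L j)

/-- Membership in `m_{u,p}(ℤ^d)`. -/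
def MemMorrey (d : ℕ) (u p : ℝ) (lam : (Fin d → ℤ) → ℂ) : Prop :=
  morreyNorm d u p lam ≠ ⊤

/-- Membership in `m^{00}_{u,p}(ℤ^d)`, the closure of the finitely supported sequences. -/
def MemMorrey00 (d : ℕ) (u p : ℝ) (lam : (Fin d → ℤ) → ℂ) : Prop :=
  MemMorrey d u p lam ∧
    ∀ ε : ℝ≥0∞, 0 < ε → ∃ mu : (Fin d → ℤ) → ℂ,
      (Function.support mu).Finite ∧ morreyNorm d u p (lam - mu) < ε

/-- `Q_{-ν,m} ⊆ Q_{-j,0}` for dyadic cubes. -/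
def subCube (d j ν : ℕ) (m : Fin d → ℤ) : Prop :=
  ν ≤ j ∧ ∀ i, 0 ≤ m i ∧ 2 ^ ν * (m i + 1) ≤ 2 ^ j

/-- Norm of the finite-dimensional Morrey space `m^{2^{jd}}_{u,p}` on the cube `Q_{-j,0}`. -/
noncomputable def finMorreyNorm (d : ℕ) (u p : ℝ) (j : ℕ) (lam : (Fin d → ℤ) → ℂ) : ℝ≥0∞ :=
  ⨆ (ν : ℕ) (m : Fin d → ℤ) (_ : subCube d j ν m),
    ((2 : ℝ≥0∞) ^ (ν * d)) ^ (1 / u - 1 / p) *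
      (∑' k : {k : Fin d → ℤ // inDyadic d ν m k}, (‖lam k.1‖₊ : ℝ≥0∞) ^ p) ^ (1 / p)

/-- Operator norm of `id_j : m^{2^{jd}}_{u₁,p₁} → m^{2^{jd}}_{u₂,p₂}`. -/
noncomputable def morreyOpNorm (d : ℕ) (u₁ p₁ u₂ p₂ : ℝ) (j : ℕ) : ℝ≥0∞ :=
  ⨆ (lam : (Fin d → ℤ) → ℂ) (_ : finMorreyNorm d u₁ p₁ j lam ≤ 1),
    finMorreyNorm d u₂ p₂ j lam

namespace MorreySep

/-- the point `(4^n, 0, ..., 0)` -/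
def pt (d n : ℕ) : Fin d → ℤ := fun i => if (i : ℕ) = 0 then 4 ^ n else 0

lemma pt_apply_zero (d n : ℕ) (hd : 0 < d) : pt d n ⟨0, hd⟩ = 4 ^ n := by simp [pt]

lemma pt_injective (d : ℕ) (hd : 0 < d) : Function.Injective (pt d) := by
  intro a b hab
  have h := congrFun hab ⟨0, hd⟩
  simp only [pt] at h
  norm_num at h
  exact h

lemma count_le {d : ℕ} (hd : 0 < d) {j : ℕ} {m : Fin d → ℤ} {n n' : ℕ}
    (h : inDyadic d j m (pt d n)) (h' : inDyadic d j m (pt d n')) (hlt : n < n') : n' ≤ j := by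
  have h0 := (h ⟨0, hd⟩).1
  have h1 := (h' ⟨0, hd⟩).2
  rw [pt_apply_zero d n hd] at h0
  rw [pt_apply_zero d n' hd] at h1
  have e1 : (4:ℤ) ^ n' < 4 ^ n + 2 ^ j := by nlinarith
  have e2 : (4:ℤ) ^ n ≤ 4 ^ (n' - 1) := pow_le_pow_right₀ (by norm_num) (by omega)
  have e3 : (4:ℤ) ^ n' = 4 * 4 ^ (n' - 1) := by
    rw [← pow_succ']; congr 1; omega
  have e4 : (4:ℤ) ^ (n' - 1) < 2 ^ j := by
    nlinarith [pow_nonneg (by norm_num : (0:ℤ) ≤ 4) (n' - 1)]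
  have e5 : (2:ℤ) ^ (2 * (n' - 1)) < 2 ^ j := by
    rw [pow_mul]; norm_num; exact e4
  have e6 : 2 * (n' - 1) < j := (pow_lt_pow_iff_right₀ (by norm_num : (1:ℤ) < 2)).mp e5
  omega

open scoped Classical in
noncomputable def lamf (d : ℕ) (S : Set ℕ) : (Fin d → ℤ) → ℂ :=
  fun k => if ∃ n ∈ S, pt d n = k then 1 else 0

lemma lamf_pt_mem {d : ℕ} {S : Set ℕ} {n : ℕ} (hn : n ∈ S) : lamf d S (pt d n) = 1 := by
  rw [lamf, if_pos ⟨n, hn, rfl⟩]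

lemma lamf_pt_not_mem {d : ℕ} (hd : 0 < d) {S : Set ℕ} {n : ℕ} (hn : n ∉ S) :
    lamf d S (pt d n) = 0 := by
  rw [lamf, if_neg]
  rintro ⟨n', hn', he⟩
  exact hn (pt_injective d hd he ▸ hn')

/-- the pointwise lower bound for the Morrey norm (scale `j = 0`) -/
lemma nnnorm_le_morreyNorm (d : ℕ) (u p : ℝ) (hp : 0 < p) (ν : (Fin d → ℤ) → ℂ)
    (k₀ : Fin d → ℤ) : (‖ν k₀‖₊ : ℝ≥0∞) ≤ morreyNorm d u p ν := by
  have hk : inDyadic d 0 k₀ k₀ := by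
    intro i
    constructor <;> simp
  have h1 : (‖ν k₀‖₊ : ℝ≥0∞) ^ p ≤
      ∑' k : {k : Fin d → ℤ // inDyadic d 0 k₀ k}, (‖ν k.1‖₊ : ℝ≥0∞) ^ p :=
    ENNReal.le_tsum (⟨k₀, hk⟩ : {k : Fin d → ℤ // inDyadic d 0 k₀ k})
  have h2 : (‖ν k₀‖₊ : ℝ≥0∞) = ((‖ν k₀‖₊ : ℝ≥0∞) ^ p) ^ (1 / p) := by
    rw [← ENNReal.rpow_mul, mul_one_div_cancel hp.ne', ENNReal.rpow_one]
  calc (‖ν k₀‖₊ : ℝ≥0∞) = ((‖ν k₀‖₊ : ℝ≥0∞) ^ p) ^ (1 / p) := h2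
    _ ≤ (∑' k : {k : Fin d → ℤ // inDyadic d 0 k₀ k}, (‖ν k.1‖₊ : ℝ≥0∞) ^ p) ^ (1 / p) :=
        ENNReal.rpow_le_rpow h1 (by positivity)
    _ = ((2 : ℝ≥0∞) ^ (0 * d)) ^ (1 / u - 1 / p) *
        (∑' k : {k : Fin d → ℤ // inDyadic d 0 k₀ k}, (‖ν k.1‖₊ : ℝ≥0∞) ^ p) ^ (1 / p) := by
        simp
    _ ≤ morreyNorm d u p ν := by
        exact le_iSup₂ (f := fun (j : ℕ) (m : Fin d → ℤ) =>
          ((2 : ℝ≥0∞) ^ (j * d)) ^ (1 / u - 1 / p) *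
            (∑' k : {k : Fin d → ℤ // inDyadic d j m k}, (‖ν k.1‖₊ : ℝ≥0∞) ^ p) ^ (1 / p)) 0 k₀

open scoped Classical in
/-- canonical index: which `n` the point `v` corresponds to -/
noncomputable def nOf (d : ℕ) (v : Fin d → ℤ) : ℕ :=
  if h : ∃ n, pt d n = v then h.choose else 0

lemma nOf_spec {d : ℕ} {v : Fin d → ℤ} (h : ∃ n, pt d n = v) : pt d (nOf d v) = v := by
  rw [nOf, dif_pos h]; exact h.choose_spec

/-- In a dyadic cube of scale `j` there are at most `j+1` points `pt n`. -/
lemma card_le {d : ℕ} (hd : 0 < d) {j : ℕ} {m : Fin d → ℤ} (G : Finset ℕ)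
    (hG : ∀ n ∈ G, inDyadic d j m (pt d n)) : G.card ≤ j + 1 := by
  by_cases hall : ∀ n ∈ G, n < j + 1
  · calc G.card ≤ (Finset.range (j+1)).card :=
        Finset.card_le_card (fun n hn => Finset.mem_range.mpr (hall n hn))
      _ = j + 1 := Finset.card_range _
  · push_neg at hall
    obtain ⟨n', hn'G, hn'⟩ := hall
    have hsub : G ⊆ {n'} := by
      intro n'' h''
      rw [Finset.mem_singleton]
      by_contra hne
      rcases lt_or_gt_of_ne hne with hlt | hgt
      · exact absurd (count_le hd (hG _ h'') (hG _ hn'G) hlt) (by omega)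
      · exact absurd (count_le hd (hG _ hn'G) (hG _ h'') hgt) (by omega)
    calc G.card ≤ ({n'} : Finset ℕ).card := Finset.card_le_card hsub
      _ = 1 := Finset.card_singleton _
      _ ≤ j + 1 := by omega

/-- Bernoulli-type bound in `ℝ≥0∞`. -/
lemma bernoulli_bound {c : ℝ≥0∞} (hc : 1 < c) (hct : c ≠ ⊤) :
    ∀ j : ℕ, (j + 1 : ℝ≥0∞) ≤ max 1 (c - 1)⁻¹ * c ^ j := by
  set K := max 1 (c - 1)⁻¹ with hK
  have hx0 : c - 1 ≠ 0 := (tsub_pos_of_lt hc).ne'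
  have hxt : c - 1 ≠ ⊤ := by
    intro h; exact hct (by simpa using (ENNReal.sub_eq_top_iff.mp h).1)
  intro j
  induction j with
  | zero =>
    have h1 : (1:ℝ≥0∞) ≤ K := hK ▸ le_max_left _ _
    simpa using h1
  | succ j ih =>
    have h1 : (1 : ℝ≥0∞) ≤ K * c ^ j * (c - 1) := by
      have : (c - 1)⁻¹ * 1 * (c - 1) ≤ K * c ^ j * (c - 1) := by
        gcongr
        · exact le_max_right _ _
        · exact one_le_pow_of_one_le' hc.le j
      calc (1 : ℝ≥0∞) = (c - 1)⁻¹ * (c - 1) := (ENNReal.inv_mul_cancel hx0 hxt).symm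
        _ = (c - 1)⁻¹ * 1 * (c - 1) := by rw [mul_one]
        _ ≤ K * c ^ j * (c - 1) := this
    have hc' : 1 + (c - 1) = c := by rw [add_comm]; exact tsub_add_cancel_of_le hc.le
    have : ((j : ℝ≥0∞) + 1) + 1 ≤ K * c ^ j + K * c ^ j * (c - 1) := add_le_add ih h1
    calc ((j + 1 : ℕ) + 1 : ℝ≥0∞) = ((j : ℝ≥0∞) + 1) + 1 := by push_cast; ring
      _ ≤ K * c ^ j + K * c ^ j * (c - 1) := this
      _ = K * (c ^ j * (1 + (c - 1))) := by ring
      _ = K * c ^ (j + 1) := by rw [hc', pow_succ]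



open scoped Classical in
lemma lamf_eq_one {d : ℕ} {S : Set ℕ} {k : Fin d → ℤ} (h : ∃ n ∈ S, pt d n = k) :
    lamf d S k = 1 := by rw [lamf, if_pos h]

open scoped Classical in
lemma lamf_eq_zero {d : ℕ} {S : Set ℕ} {k : Fin d → ℤ} (h : ¬ ∃ n ∈ S, pt d n = k) :
    lamf d S k = 0 := by rw [lamf, if_neg h]

lemma morreyNorm_lamf_ne_top (d : ℕ) (hd : 0 < d) (u p : ℝ) (hp : 0 < p) (hpu : p < u)
    (S : Set ℕ) : morreyNorm d u p (lamf d S) ≠ ⊤ := by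
  classical
  have hu : 0 < u := hp.trans hpu
  set a : ℝ := 1 / p - 1 / u with ha_def
  have ha : 0 < a := by
    have h1 : 1 / u < 1 / p := one_div_lt_one_div_of_lt hp hpu
    rw [ha_def]; linarith
  set β : ℝ := d * a * p with hβ_def
  have hd' : (0:ℝ) < d := by exact_mod_cast hd
  have hβ : 0 < β := by rw [hβ_def]; positivity
  set c : ℝ≥0∞ := (2:ℝ≥0∞) ^ β with hc_def
  have hc1 : 1 < c := ENNReal.one_lt_rpow (by norm_num) hβ
  have hct : c ≠ ⊤ := ENNReal.rpow_ne_top_of_nonneg hβ.le (by norm_num)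
  set K : ℝ≥0∞ := max 1 (c - 1)⁻¹ with hK_def
  have hKinv : (c - 1)⁻¹ ≠ ⊤ := ENNReal.inv_ne_top.mpr (tsub_pos_of_lt hc1).ne'
  have hKt : K ≠ ⊤ := (max_lt ENNReal.one_lt_top hKinv.lt_top).ne
  have hB := bernoulli_bound hc1 hct
  have hp' : (0:ℝ) < 1 / p := by positivity
  have hBt : K ^ (1 / p) ≠ ⊤ := ENNReal.rpow_ne_top_of_nonneg hp'.le hKt
  have hle : morreyNorm d u p (lamf d S) ≤ K ^ (1 / p) := by
    unfold morreyNorm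
    refine iSup₂_le fun j m => ?_
    have hT : (∑' k : {k : Fin d → ℤ // inDyadic d j m k}, (‖lamf d S k.1‖₊ : ℝ≥0∞) ^ p) ≤
        ((j : ℝ≥0∞) + 1) := by
      rw [ENNReal.tsum_eq_iSup_sum]
      refine iSup_le fun F => ?_
      have hterm : ∀ k : {k : Fin d → ℤ // inDyadic d j m k},
          (‖lamf d S k.1‖₊ : ℝ≥0∞) ^ p ≤ (if ∃ n, pt d n = k.1 then (1:ℝ≥0∞) else 0) := by
        intro k
        by_cases h : ∃ n ∈ S, pt d n = k.1
        · rw [if_pos ⟨h.choose, h.choose_spec.2⟩, lamf_eq_one h]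
          simp
        · rw [lamf_eq_zero h]
          simp [ENNReal.zero_rpow_of_pos hp]
      refine le_trans (Finset.sum_le_sum fun k _ => hterm k) ?_
      rw [Finset.sum_boole]
      have hecard : (F.filter (fun k => ∃ n, pt d n = k.1)).card ≤ j + 1 := by
        set F' := F.filter (fun k => ∃ n, pt d n = k.1) with hF'
        have hinj : Set.InjOn (fun k : {k : Fin d → ℤ // inDyadic d j m k} => nOf d k.1) F' := by
          intro k hk k' hk' he
          have h1 : pt d (nOf d k.1) = k.1 := nOf_spec (Finset.mem_filter.mp hk).2
          have h2 : pt d (nOf d k'.1) = k'.1 := nOf_spec (Finset.mem_filter.mp hk').2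
          apply Subtype.ext
          rw [← h1, ← h2]
          simp only at he
          rw [he]
        rw [← Finset.card_image_of_injOn hinj]
        apply card_le hd
        intro n hn
        obtain ⟨k, hk, rfl⟩ := Finset.mem_image.mp hn
        have h1 : pt d (nOf d k.1) = k.1 := nOf_spec (Finset.mem_filter.mp hk).2
        rw [h1]
        exact k.2
      calc ((F.filter (fun k => ∃ n, pt d n = k.1)).card : ℝ≥0∞) ≤ ((j + 1 : ℕ) : ℝ≥0∞) := by
            exact_mod_cast hecard
        _ = (j : ℝ≥0∞) + 1 := by push_cast; ring
    have hW : ((2:ℝ≥0∞) ^ (j * d)) ^ (1 / u - 1 / p) =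
        (2:ℝ≥0∞) ^ (-(((j * d : ℕ) : ℝ) * a)) := by
      rw [← ENNReal.rpow_natCast 2 (j * d), ← ENNReal.rpow_mul]
      congr 1
      rw [ha_def]; ring
    have hcj : c ^ j = (2:ℝ≥0∞) ^ (β * j) := by
      rw [hc_def, ← ENNReal.rpow_natCast ((2:ℝ≥0∞) ^ β) j, ← ENNReal.rpow_mul]
    have hj1 : ((j : ℝ≥0∞) + 1) ^ (1 / p) ≤
        K ^ (1 / p) * (2:ℝ≥0∞) ^ (((j * d : ℕ) : ℝ) * a) := by
      have h1 : ((j : ℝ≥0∞) + 1) ≤ K * (2:ℝ≥0∞) ^ (β * j) := by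
        rw [← hcj]; exact hB j
      have h2 := ENNReal.rpow_le_rpow h1 hp'.le
      rw [ENNReal.mul_rpow_of_nonneg _ _ hp'.le, ← ENNReal.rpow_mul] at h2
      have h3 : β * (j : ℝ) * (1 / p) = ((j * d : ℕ) : ℝ) * a := by
        rw [hβ_def]; push_cast; field_simp
      rwa [h3] at h2
    calc ((2:ℝ≥0∞) ^ (j * d)) ^ (1 / u - 1 / p) *
          (∑' k : {k : Fin d → ℤ // inDyadic d j m k}, (‖lamf d S k.1‖₊ : ℝ≥0∞) ^ p) ^ (1 / p)
        ≤ ((2:ℝ≥0∞) ^ (j * d)) ^ (1 / u - 1 / p) * ((j : ℝ≥0∞) + 1) ^ (1 / p) :=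
          mul_le_mul_right (ENNReal.rpow_le_rpow hT hp'.le) _
      _ ≤ (2:ℝ≥0∞) ^ (-(((j * d : ℕ) : ℝ) * a)) *
            (K ^ (1 / p) * (2:ℝ≥0∞) ^ (((j * d : ℕ) : ℝ) * a)) := by
          rw [hW]; exact mul_le_mul_right hj1 _
      _ = K ^ (1 / p) *
            ((2:ℝ≥0∞) ^ (-(((j * d : ℕ) : ℝ) * a)) * (2:ℝ≥0∞) ^ (((j * d : ℕ) : ℝ) * a)) := by
          ring
      _ = K ^ (1 / p) := by
          rw [← ENNReal.rpow_add _ _ (by norm_num) (by norm_num)]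
          simp
  exact ne_top_of_le_ne_top hBt hle

end MorreySep

theorem morrey_not_separable (d : ℕ) (hd : 0 < d) (u p : ℝ) (hp : 0 < p) (hpu : p < u) :
    ¬ ∃ D : Set ((Fin d → ℤ) → ℂ), D.Countable ∧
        ∀ lam : (Fin d → ℤ) → ℂ, morreyNorm d u p lam ≠ ⊤ →
          ∀ ε : ℝ≥0∞, 0 < ε → ∃ mu ∈ D,
            morreyNorm d u p mu ≠ ⊤ ∧ morreyNorm d u p (lam - mu) < ε := by
  rintro ⟨D, hD, hdense⟩
  classical
  have hfin : ∀ S : Set ℕ, morreyNorm d u p (MorreySep.lamf d S) ≠ ⊤ :=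
    fun S => MorreySep.morreyNorm_lamf_ne_top d hd u p hp hpu S
  set ε : ℝ≥0∞ := ENNReal.ofReal (1/2) with hε_def
  have hε : 0 < ε := ENNReal.ofReal_pos.mpr (by norm_num)
  choose g hgD hgfin hglt using fun S : Set ℕ => hdense (MorreySep.lamf d S) (hfin S) ε hε
  have key : ∀ A B : Set ℕ, g A = g B → A ⊆ B := by
    intro A B hab n hnA
    by_contra hnB
    set k₀ := MorreySep.pt d n with hk₀
    have h1 : (‖(MorreySep.lamf d A - g A) k₀‖₊ : ℝ≥0∞) < ε :=
      lt_of_le_of_lt (MorreySep.nnnorm_le_morreyNorm d u p hp _ k₀) (hglt A)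
    have h2 : (‖(MorreySep.lamf d B - g A) k₀‖₊ : ℝ≥0∞) < ε := by
      rw [hab]
      exact lt_of_le_of_lt (MorreySep.nnnorm_le_morreyNorm d u p hp _ k₀) (hglt B)
    have e1 : MorreySep.lamf d A k₀ = 1 := MorreySep.lamf_pt_mem hnA
    have e2 : MorreySep.lamf d B k₀ = 0 := MorreySep.lamf_pt_not_mem hd hnB
    have r1 : ‖(1:ℂ) - g A k₀‖ < 1/2 := by
      have := h1
      rw [Pi.sub_apply, e1, ← enorm_eq_nnnorm, ← ofReal_norm, hε_def] at this
      exact (ENNReal.ofReal_lt_ofReal_iff (by norm_num)).mp this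
    have r2 : ‖g A k₀‖ < 1/2 := by
      have := h2
      rw [Pi.sub_apply, e2, ← enorm_eq_nnnorm, ← ofReal_norm, hε_def] at this
      have := (ENNReal.ofReal_lt_ofReal_iff (by norm_num)).mp this
      simpa using this
    have htri := norm_add_le ((1:ℂ) - g A k₀) (g A k₀)
    simp only [sub_add_cancel] at htri
    rw [show ‖(1:ℂ)‖ = 1 by simp] at htri
    linarith
  haveI : Countable ↥D := hD.to_subtype
  obtain ⟨f, hf⟩ := exists_injective_nat ↥D
  have hcantor := Function.cantor_injective (fun S : Set ℕ => f ⟨g S, hgD S⟩)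
  apply hcantor
  intro A B hAB
  have : (⟨g A, hgD A⟩ : ↥D) = ⟨g B, hgD B⟩ := hf hAB
  have hgab : g A = g B := congrArg Subtype.val this
  exact Set.Subset.antisymm (key A B hgab) (key B A hgab.symm)
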